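/- Let F be a rigid field with s(F) ≠ 2, let φ₁, φ₂ be quadratic forms over F with φ₁ ⊥ φ₂ anisotropic, and let ψ ⊆ φ₁ ⊥ φ₂ be a subform. Then there exist forms ψ₁ ⊆ φ₁ and ψ₂ ⊆ φ₂ with ψ ≅ ψ₁ ⊥ ψ₂. -/

import Mathlib

namespace PN

variable (F : Type*) [Field F]

/-- The diagonal quadratic form with diagonal entries given by a list. -/
noncomputable def qf (l : List F) : QuadraticForm F (Fin l.length → F) :=
  QuadraticMap.weightedSumSquares F l.get

/-- Isometry of diagonal quadratic forms. -/
def Isom (l l' : List F) : Prop :=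
  Nonempty (QuadraticMap.IsometryEquiv (qf F l) (qf F l'))

/-- Diagonalization of the sum of `k` hyperbolic planes. -/
def hypList (k : ℕ) : List F :=
  List.replicate k (1 : F) ++ List.replicate k (-1 : F)

/-- A (diagonalized) form is hyperbolic if it is isometric to a sum of hyperbolic planes. -/
def IsHyp (l : List F) : Prop := ∃ k : ℕ, Isom F l (hypList F k)

def negList (l : List F) : List F := l.map (fun x => -x)

/-- Witt equivalence of diagonalized quadratic forms. -/
def WittEquiv (l l' : List F) : Prop := IsHyp F (l ++ negList F l')

/-- Nondegeneracy: all diagonal entries are nonzero. -/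
def Nondeg (l : List F) : Prop := ∀ x ∈ l, x ≠ 0

/-- Diagonalization of the Pfister form `⟪a₁,…,aₙ⟫ = ⟨1,-a₁⟩⊗⋯⊗⟨1,-aₙ⟩`. -/
def pfister : List F → List F
  | [] => [1]
  | a :: l => pfister l ++ (pfister l).map (fun x => -a * x)

/-- `l` is a diagonalization of an `n`-fold Pfister form. -/
def IsPfister (n : ℕ) (l : List F) : Prop :=
  ∃ a : Fin n → F, (∀ i, a i ≠ 0) ∧ l = pfister F (List.ofFn a)

/-- `l` is a diagonalization of a form similar to an `n`-fold Pfister form. -/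
def IsGP (n : ℕ) (l : List F) : Prop :=
  ∃ c : F, c ≠ 0 ∧ ∃ p : List F, IsPfister F n p ∧ l = p.map (fun x => c * x)

/-- The Witt class of `l` lies in `IⁿF`, i.e. it is a sum of classes of
forms similar to `n`-fold Pfister forms. -/
def InI (n : ℕ) (l : List F) : Prop :=
  ∃ L : List (List F), (∀ p ∈ L, IsGP F n p) ∧ WittEquiv F l L.flatten

/-- The (scaled) `n`-Pfister number of `l` (`⊤` if the Witt class of `l` is not in `IⁿF`). -/
noncomputable def GPnum (n : ℕ) (l : List F) : ℕ∞ :=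
  sInf {k : ℕ∞ | ∃ L : List (List F), (L.length : ℕ∞) = k ∧
    (∀ p ∈ L, IsGP F n p) ∧ WittEquiv F l L.flatten}

/-- The unscaled `n`-Pfister number: least number of genuine `n`-fold Pfister
forms with signs `±1` whose Witt classes sum to that of `l`. -/
noncomputable def Pnum (n : ℕ) (l : List F) : ℕ∞ :=
  sInf {k : ℕ∞ | ∃ L : List (List F), (L.length : ℕ∞) = k ∧
    (∀ p ∈ L, IsPfister F n p ∨ ∃ q : List F, IsPfister F n q ∧ p = negList F q) ∧
    WittEquiv F l L.flatten}

/-- `GP_n(F, d)`: the supremum of `n`-Pfister numbers of forms in `IⁿF` of dimension `≤ d`. -/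
noncomputable def GPsup (n : ℕ) (d : ℕ) : ℕ∞ :=
  ⨆ l ∈ {l : List F | Nondeg F l ∧ InI F n l ∧ l.length ≤ d}, GPnum F n l

/-- `a` is a nonzero value represented by the form `l`. -/
def Represents (l : List F) (a : F) : Prop := a ≠ 0 ∧ ∃ x, qf F l x = a

/-- The set of nonzero represented values. -/
def D (l : List F) : Set F := {a | Represents F l a}

def Anisotropic (l : List F) : Prop := (qf F l).Anisotropic

def SameSquareClass (a b : F) : Prop := ∃ c : F, c ≠ 0 ∧ a = b * c ^ 2

/-- A field is rigid if every anisotropic binary form represents at most two square classes. -/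
def Rigid : Prop := ∀ x y : F, x ≠ 0 → y ≠ 0 → Anisotropic F [x, y] →
  ∃ u v : F, ∀ a : F, Represents F [x, y] a →
    SameSquareClass F a u ∨ SameSquareClass F a v

/-- The level `s(F)`: the least `n` such that `-1` is a sum of `n` squares (`⊤` if none). -/
noncomputable def level : ℕ∞ :=
  sInf {m : ℕ∞ | ∃ n : ℕ, m = (n : ℕ∞) ∧ ∃ f : Fin n → F, (-1 : F) = ∑ i, f i ^ 2}

/-- `l` is (isometric to) a subform of `l'`. -/
def Subform (l l' : List F) : Prop := ∃ r : List F, Isom F l' (l ++ r)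

end PN

set_option linter.unusedSectionVars false

namespace PNAux
open QuadraticMap

variable {F : Type*} [Field F]

/-- Reindexing a weighted sum of squares. -/
noncomputable def reindexIsom {m n : ℕ} (e : Fin m ≃ Fin n) (w : Fin m → F) (w' : Fin n → F)
    (h : ∀ i, w i = w' (e i)) :
    (weightedSumSquares F w).IsometryEquiv (weightedSumSquares F w') where
  toLinearEquiv := LinearEquiv.funCongrLeft F F e.symm
  map_app' := by
    intro x
    simp only [weightedSumSquares_apply, LinearEquiv.funCongrLeft_apply]
    refine (Fintype.sum_equiv e _ _ fun i => ?_).symm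
    simp [h i]

lemma isom_of_get {l l' : List F} (h : l.length = l'.length)
    (hg : ∀ i : Fin l.length, l.get i = l'.get (Fin.cast h i)) : PN.Isom F l l' :=
  ⟨reindexIsom (finCongr h) l.get l'.get hg⟩

lemma isom_refl (l : List F) : PN.Isom F l l := ⟨QuadraticMap.IsometryEquiv.refl _⟩

lemma isom_symm {l l' : List F} (h : PN.Isom F l l') : PN.Isom F l' l := h.elim fun f => ⟨f.symm⟩

lemma isom_trans {l₁ l₂ l₃ : List F} (h : PN.Isom F l₁ l₂) (h' : PN.Isom F l₂ l₃) :
    PN.Isom F l₁ l₃ := h.elim fun f => h'.elim fun g => ⟨f.trans g⟩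


/-- Splitting a diagonal form along an append. -/
noncomputable def appendIsom (l₁ l₂ : List F) :
    (PN.qf F (l₁ ++ l₂)).IsometryEquiv ((PN.qf F l₁).prod (PN.qf F l₂)) where
  toLinearEquiv :=
    (LinearEquiv.funCongrLeft F F
      ((finSumFinEquiv).trans (finCongr (List.length_append (as := l₁) (bs := l₂)).symm))).trans
      (LinearEquiv.sumArrowLequivProdArrow _ _ F F)
  map_app' := by
    intro x
    set e : Fin l₁.length ⊕ Fin l₂.length ≃ Fin (l₁ ++ l₂).length :=
      (finSumFinEquiv).trans (finCongr (List.length_append (as := l₁) (bs := l₂)).symm) with he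
    show PN.qf F l₁ (fun i => x (e (Sum.inl i))) + PN.qf F l₂ (fun i => x (e (Sum.inr i)))
      = PN.qf F (l₁ ++ l₂) x
    simp only [PN.qf, weightedSumSquares_apply]
    rw [← Equiv.sum_comp e (fun k => (l₁ ++ l₂).get k • (x k * x k)), Fintype.sum_sum_type]
    congr 1
    · refine Finset.sum_congr rfl fun i _ => ?_
      congr 1
      simp only [he, List.get_eq_getElem, Equiv.trans_apply, finSumFinEquiv_apply_left,
        finCongr_apply, Fin.coe_cast, Fin.coe_castAdd]
      rw [List.getElem_append_left]
    · refine Finset.sum_congr rfl fun i _ => ?_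
      congr 1
      simp only [he, List.get_eq_getElem, Equiv.trans_apply, finSumFinEquiv_apply_right,
        finCongr_apply, Fin.coe_cast, Fin.coe_natAdd]
      rw [List.getElem_append_right (by omega)]
      congr 1
      omega


lemma isom_append_congr {l₁ l₁' l₂ l₂' : List F} (h₁ : PN.Isom F l₁ l₁')
    (h₂ : PN.Isom F l₂ l₂') : PN.Isom F (l₁ ++ l₂) (l₁' ++ l₂') :=
  h₁.elim fun f => h₂.elim fun g =>
    ⟨(appendIsom l₁ l₂).trans ((f.prod g).trans (appendIsom l₁' l₂').symm)⟩

lemma isom_append_comm (l₁ l₂ : List F) : PN.Isom F (l₁ ++ l₂) (l₂ ++ l₁) :=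
  ⟨(appendIsom l₁ l₂).trans ((IsometryEquiv.prodComm _ _).trans (appendIsom l₂ l₁).symm)⟩

lemma isom_cons {l l' : List F} (a : F) (h : PN.Isom F l l') : PN.Isom F (a :: l) (a :: l') :=
  isom_append_congr (l₁ := [a]) (l₁' := [a]) (isom_refl _) h

lemma isom_of_eq {l l' : List F} (h : l = l') : PN.Isom F l l' := h ▸ isom_refl l

lemma qf_append_eval (l₁ l₂ : List F) (x : Fin l₁.length → F) (y : Fin l₂.length → F) :
    PN.qf F (l₁ ++ l₂) ((appendIsom l₁ l₂).symm (x, y)) = PN.qf F l₁ x + PN.qf F l₂ y := by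
  rw [(appendIsom l₁ l₂).symm.map_app (x, y), QuadraticMap.prod_apply]

lemma aniso_of_isom {l l' : List F} (h : PN.Isom F l l') (ha : PN.Anisotropic F l) :
    PN.Anisotropic F l' := by
  obtain ⟨f⟩ := h
  intro x hx
  have h1 : PN.qf F l (f.symm x) = 0 := by rw [f.symm.map_app]; exact hx
  have h0 : f.symm x = 0 := ha _ h1
  exact (EquivLike.injective f.symm) (by rw [h0, map_zero])

lemma aniso_append_left {l₁ l₂ : List F} (h : PN.Anisotropic F (l₁ ++ l₂)) :
    PN.Anisotropic F l₁ := by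
  intro x hx
  have h0 : (appendIsom l₁ l₂).symm (x, (0 : Fin l₂.length → F)) = 0 := by
    apply h
    rw [qf_append_eval, hx, map_zero, add_zero]
  have h1 : (x, (0 : Fin l₂.length → F)) = 0 := by
    apply (EquivLike.injective (appendIsom l₁ l₂).symm)
    rw [h0, map_zero]
  exact congrArg Prod.fst h1

lemma aniso_append_right {l₁ l₂ : List F} (h : PN.Anisotropic F (l₁ ++ l₂)) :
    PN.Anisotropic F l₂ := by
  intro x hx
  have h0 : (appendIsom l₁ l₂).symm ((0 : Fin l₁.length → F), x) = 0 := by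
    apply h
    rw [qf_append_eval, hx, map_zero, zero_add]
  have h1 : ((0 : Fin l₁.length → F), x) = 0 := by
    apply (EquivLike.injective (appendIsom l₁ l₂).symm)
    rw [h0, map_zero]
  exact congrArg Prod.snd h1

lemma aniso_tail {a : F} {l : List F} (h : PN.Anisotropic F (a :: l)) : PN.Anisotropic F l :=
  aniso_append_right (l₁ := [a]) h

lemma qf_single (l : List F) (i : Fin l.length) : PN.qf F l (Pi.single i 1) = l.get i := by
  classical
  simp only [PN.qf, weightedSumSquares_apply, Pi.single_apply]
  rw [Finset.sum_eq_single i]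
  · simp
  · intro b _ hb
    simp [hb]
  · intro h
    exact absurd (Finset.mem_univ i) h

lemma head_ne_zero {a : F} {l : List F} (h : PN.Anisotropic F (a :: l)) : a ≠ 0 := by
  intro ha0
  have h1 : PN.qf F (a :: l) (Pi.single (⟨0, by simp⟩ : Fin ((a :: l).length)) 1) = 0 := by
    rw [qf_single]
    exact ha0
  have h2 := h _ h1
  have h3 := congrFun h2 ⟨0, by simp⟩
  rw [Pi.single_eq_same] at h3
  exact one_ne_zero h3

lemma repr_head {a : F} {l : List F} (ha : a ≠ 0) : PN.Represents F (a :: l) a :=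
  ⟨ha, Pi.single (⟨0, by simp⟩ : Fin ((a :: l).length)) 1, by rw [qf_single]; rfl⟩

lemma repr_of_isom {l l' : List F} {a : F} (h : PN.Isom F l l') (hr : PN.Represents F l a) :
    PN.Represents F l' a := by
  obtain ⟨f⟩ := h
  obtain ⟨ha, x, hx⟩ := hr
  exact ⟨ha, f x, by rw [f.map_app]; exact hx⟩

lemma repr_smul {l : List F} {a c : F} (hc : c ≠ 0) (h : PN.Represents F l a) :
    PN.Represents F l (a * c ^ 2) := by
  obtain ⟨ha, x, hx⟩ := h
  refine ⟨mul_ne_zero ha (pow_ne_zero 2 hc), c • x, ?_⟩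
  rw [QuadraticMap.map_smul, hx, smul_eq_mul]
  ring

lemma repr_append_left {l₁ l₂ : List F} {a : F} (h : PN.Represents F l₁ a) :
    PN.Represents F (l₁ ++ l₂) a := by
  obtain ⟨ha, x, hx⟩ := h
  exact ⟨ha, (appendIsom l₁ l₂).symm (x, 0), by rw [qf_append_eval, hx, map_zero, add_zero]⟩

lemma repr_append_right {l₁ l₂ : List F} {a : F} (h : PN.Represents F l₂ a) :
    PN.Represents F (l₁ ++ l₂) a := by
  obtain ⟨ha, x, hx⟩ := h
  exact ⟨ha, (appendIsom l₁ l₂).symm (0, x), by rw [qf_append_eval, hx, map_zero, zero_add]⟩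

lemma ssc_refl (a : F) : PN.SameSquareClass F a a := ⟨1, one_ne_zero, by ring⟩

lemma ssc_symm {a b : F} (h : PN.SameSquareClass F a b) : PN.SameSquareClass F b a := by
  obtain ⟨c, hc, h⟩ := h
  exact ⟨c⁻¹, inv_ne_zero hc, by rw [h]; field_simp⟩

lemma ssc_trans {a b c : F} (h : PN.SameSquareClass F a b) (h' : PN.SameSquareClass F b c) :
    PN.SameSquareClass F a c := by
  obtain ⟨d, hd, rfl⟩ := h
  obtain ⟨e, he, rfl⟩ := h'
  exact ⟨e * d, mul_ne_zero he hd, by ring⟩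

lemma level_eq_two {p q : F} (h : (-1 : F) = p ^ 2 + q ^ 2) (hns : ∀ r : F, (-1 : F) ≠ r ^ 2) :
    PN.level F = 2 := by
  apply le_antisymm
  · apply sInf_le
    refine ⟨2, rfl, ![p, q], ?_⟩
    rw [Fin.sum_univ_two]
    simpa using h
  · apply le_sInf
    rintro m ⟨n, rfl, f, hf⟩
    match n with
    | 0 =>
      simp only [Finset.univ_eq_empty, Finset.sum_empty] at hf
      exact absurd (neg_eq_zero.mp hf) one_ne_zero
    | 1 =>
      rw [Fin.sum_univ_one] at hf
      exact absurd hf (hns _)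
    | (k + 2) =>
      exact_mod_cast Nat.le_add_left 2 k




lemma isom_symm_apply_apply {M₁ M₂ : Type*} [AddCommGroup M₁] [Module F M₁]
    [AddCommGroup M₂] [Module F M₂] {Q₁ : QuadraticForm F M₁} {Q₂ : QuadraticForm F M₂}
    (f : Q₁.IsometryEquiv Q₂) (x : M₁) : f.symm (f x) = x :=
  f.toLinearEquiv.symm_apply_apply x

lemma qf_singleton (x : F) (u : Fin ([x] : List F).length → F) :
    PN.qf F [x] u = x * (u ⟨0, by simp⟩) ^ 2 := by
  simp only [PN.qf, weightedSumSquares_apply]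
  rw [Finset.sum_eq_single (⟨0, by simp⟩ : Fin ([x] : List F).length)]
  · rw [smul_eq_mul, show ([x] : List F).get ⟨0, by simp⟩ = x from rfl]
    ring
  · rintro ⟨bv, hbv⟩ _ hb
    have hbv' : bv < 1 := hbv
    obtain rfl : bv = 0 := by omega
    exact absurd rfl hb
  · intro h
    exact absurd (Finset.mem_univ _) h

lemma fin_one_eq_zero {x : F} (i : Fin ([x] : List F).length) : i = ⟨0, by simp⟩ := by
  rcases i with ⟨iv, hiv⟩
  have hiv' : iv < 1 := hiv
  obtain rfl : iv = 0 := by omega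
  rfl

lemma repr_pair {x y : F} (s t : F) (h : x * s ^ 2 + y * t ^ 2 ≠ 0) :
    PN.Represents F [x, y] (x * s ^ 2 + y * t ^ 2) := by
  refine ⟨h, (appendIsom [x] [y]).symm ((fun _ => s), (fun _ => t)), ?_⟩
  show PN.qf F ([x] ++ [y]) ((appendIsom [x] [y]).symm ((fun _ => s), (fun _ => t))) = _
  rw [qf_append_eval, qf_singleton, qf_singleton]

lemma aniso_pair {x y : F} (h : ∀ s t : F, x * s ^ 2 + y * t ^ 2 = 0 → s = 0 ∧ t = 0) :
    PN.Anisotropic F [x, y] := by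
  intro v hv
  have hv' : v = (appendIsom [x] [y]).symm ((appendIsom [x] [y]) v) :=
    (isom_symm_apply_apply _ v).symm
  set p := (appendIsom [x] [y]) v with hp
  have hval : x * (p.1 ⟨0, by simp⟩) ^ 2 + y * (p.2 ⟨0, by simp⟩) ^ 2 = 0 := by
    rw [← qf_singleton, ← qf_singleton, ← qf_append_eval [x] [y] p.1 p.2, ← hv']
    exact hv
  obtain ⟨hs, ht⟩ := h _ _ hval
  have hp1 : p.1 = 0 := funext fun i => by rw [fin_one_eq_zero i]; exact hs
  have hp2 : p.2 = 0 := funext fun i => by rw [fin_one_eq_zero i]; exact ht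
  rw [hv', show p = 0 from Prod.ext hp1 hp2, map_zero]

lemma repr_of_ssc {l : List F} {a b : F} (h : PN.SameSquareClass F a b)
    (hr : PN.Represents F l b) : PN.Represents F l a := by
  obtain ⟨c, hc, rfl⟩ := h
  exact repr_smul hc hr

/-- The key value-splitting lemma over rigid fields with level different from 2. -/
lemma value_split (hrigid : PN.Rigid F) (hlevel : PN.level F ≠ 2)
    {φ₁ φ₂ : List F} (han : PN.Anisotropic F (φ₁ ++ φ₂)) {a : F}
    (ha : PN.Represents F (φ₁ ++ φ₂) a) :
    PN.Represents F φ₁ a ∨ PN.Represents F φ₂ a := by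
  obtain ⟨ha0, v, hv⟩ := ha
  have hv0 : v = (appendIsom φ₁ φ₂).symm ((appendIsom φ₁ φ₂) v) :=
    (isom_symm_apply_apply _ v).symm
  set p := (appendIsom φ₁ φ₂) v with hp
  have hv' : PN.qf F φ₁ p.1 + PN.qf F φ₂ p.2 = a := by
    rw [← qf_append_eval φ₁ φ₂ p.1 p.2, ← hv0]
    exact hv
  set a₁ := PN.qf F φ₁ p.1 with ha₁
  set a₂ := PN.qf F φ₂ p.2 with ha₂
  by_cases h₁ : a₁ = 0
  · right
    refine ⟨ha0, p.2, ?_⟩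
    rw [h₁, zero_add] at hv'
    exact hv'
  by_cases h₂ : a₂ = 0
  · left
    refine ⟨ha0, p.1, ?_⟩
    rw [h₂, add_zero] at hv'
    exact hv'
  have hx₁ : p.1 ≠ 0 := fun h => h₁ (by rw [ha₁, h, map_zero])
  have hx₂ : p.2 ≠ 0 := fun h => h₂ (by rw [ha₂, h, map_zero])
  have hrc : ∀ s t : F, a₁ * s ^ 2 + a₂ * t ^ 2 = 0 → s = 0 ∧ t = 0 := by
    intro s t hst
    have hz : PN.qf F (φ₁ ++ φ₂) ((appendIsom φ₁ φ₂).symm (s • p.1, t • p.2)) = 0 := by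
      rw [qf_append_eval, QuadraticMap.map_smul, QuadraticMap.map_smul, ← ha₁, ← ha₂,
        smul_eq_mul, smul_eq_mul, ← hst]
      ring
    have h0 := han _ hz
    have h0' : ((s • p.1, t • p.2) : (Fin φ₁.length → F) × (Fin φ₂.length → F)) = 0 := by
      apply EquivLike.injective (appendIsom φ₁ φ₂).symm
      rw [h0, map_zero]
    constructor
    · rcases smul_eq_zero.mp (congrArg Prod.fst h0') with h | h
      · exact h
      · exact absurd h hx₁
    · rcases smul_eq_zero.mp (congrArg Prod.snd h0') with h | h
      · exact h
      · exact absurd h hx₂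
  have haniso2 : PN.Anisotropic F [a₁, a₂] := aniso_pair hrc
  obtain ⟨u, w, hclass⟩ := hrigid a₁ a₂ h₁ h₂ haniso2
  have r1 : PN.Represents F [a₁, a₂] a₁ := by
    have := repr_pair (x := a₁) (y := a₂) 1 0 (by simpa using h₁)
    simpa using this
  have r2 : PN.Represents F [a₁, a₂] a₂ := by
    have := repr_pair (x := a₁) (y := a₂) 0 1 (by simpa using h₂)
    simpa using this
  have ra : PN.Represents F [a₁, a₂] a := by
    have heq : a₁ * 1 ^ 2 + a₂ * 1 ^ 2 = a := by rw [← hv']; ring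
    have := repr_pair (x := a₁) (y := a₂) 1 1 (by rw [heq]; exact ha0)
    rwa [heq] at this
  by_cases hA1 : PN.SameSquareClass F a a₁
  · left
    exact repr_of_ssc hA1 ⟨h₁, p.1, rfl⟩
  by_cases hA2 : PN.SameSquareClass F a a₂
  · right
    exact repr_of_ssc hA2 ⟨h₂, p.2, rfl⟩
  exfalso
  have h12 : PN.SameSquareClass F a₂ a₁ := by
    rcases hclass a ra with h | h
    · rcases hclass a₁ r1 with h1 | h1
      · exact absurd (ssc_trans h (ssc_symm h1)) hA1
      · rcases hclass a₂ r2 with hh | hh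
        · exact absurd (ssc_trans h (ssc_symm hh)) hA2
        · exact ssc_trans hh (ssc_symm h1)
    · rcases hclass a₁ r1 with h1 | h1
      · rcases hclass a₂ r2 with hh | hh
        · exact ssc_trans hh (ssc_symm h1)
        · exact absurd (ssc_trans h (ssc_symm hh)) hA2
      · exact absurd (ssc_trans h (ssc_symm h1)) hA1
  obtain ⟨e, he, hee⟩ := h12
  have hsq : ∀ r : F, (-1 : F) ≠ r ^ 2 := by
    intro r hr
    have h0 : a₁ * (r * e) ^ 2 + a₂ * 1 ^ 2 = 0 := by
      rw [hee]
      linear_combination (-(a₁ * e ^ 2)) * hr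
    exact one_ne_zero (hrc _ _ h0).2
  set c := 1 + e ^ 2 with hcdef
  have hac : a = a₁ * c := by
    rw [← hv', hee, hcdef]
    ring
  have hc0 : c ≠ 0 := by
    intro h
    exact ha0 (by rw [hac, h, mul_zero])
  have hcns : ∀ r : F, c ≠ r ^ 2 := by
    intro r hr
    have hr0 : r ≠ 0 := by
      intro h
      rw [h] at hr
      exact hc0 (by rw [hr]; ring)
    exact hA1 ⟨r, hr0, by rw [hac, hr]⟩
  have hcnm : ∀ r : F, c ≠ -(r ^ 2) := by
    intro r hr
    have hr0 : r ≠ 0 := by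
      intro h
      rw [h] at hr
      exact hc0 (by rw [hr]; ring)
    have hl2 : (-1 : F) = (1 / r) ^ 2 + (e / r) ^ 2 := by
      field_simp
      linear_combination -hr
    exact hlevel (level_eq_two hl2 hsq)
  have haniso3 : PN.Anisotropic F [c, -1] := by
    apply aniso_pair
    intro s t hst
    by_cases hs : s = 0
    · refine ⟨hs, ?_⟩
      rw [hs] at hst
      have ht2 : t ^ 2 = 0 := by linear_combination -hst
      exact pow_eq_zero_iff (n := 2) (by norm_num) |>.mp ht2
    · exfalso
      refine hcns (t / s) ?_
      rw [div_pow, eq_div_iff (pow_ne_zero 2 hs)]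
      linear_combination hst
  obtain ⟨u', w', hcl⟩ := hrigid c (-1) hc0 (neg_ne_zero.mpr one_ne_zero) haniso3
  have rc : PN.Represents F [c, -1] c := by
    have heq : c * 1 ^ 2 + (-1 : F) * 0 ^ 2 = c := by ring
    have := repr_pair (x := c) (y := (-1 : F)) 1 0 (by rw [heq]; exact hc0)
    rwa [heq] at this
  have rm : PN.Represents F [c, -1] (-1) := by
    have heq : c * 0 ^ 2 + (-1 : F) * 1 ^ 2 = -1 := by ring
    have := repr_pair (x := c) (y := (-1 : F)) 0 1
      (by rw [heq]; exact neg_ne_zero.mpr one_ne_zero)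
    rwa [heq] at this
  have r1' : PN.Represents F [c, -1] 1 := by
    have heq : c * 1 ^ 2 + (-1 : F) * e ^ 2 = 1 := by rw [hcdef]; ring
    have := repr_pair (x := c) (y := (-1 : F)) 1 e (by rw [heq]; exact one_ne_zero)
    rwa [heq] at this
  have d1 : ¬ PN.SameSquareClass F c 1 := by
    rintro ⟨r, hr, h⟩
    exact hcns r (by rw [h, one_mul])
  have d2 : ¬ PN.SameSquareClass F c (-1) := by
    rintro ⟨r, hr, h⟩
    exact hcnm r (by rw [h]; ring)
  have d3 : ¬ PN.SameSquareClass F (1 : F) (-1) := by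
    rintro ⟨r, hr, h⟩
    exact hsq r (by linear_combination -h)
  rcases hcl c rc with h1 | h1 <;> rcases hcl (-1) rm with h2 | h2 <;>
    rcases hcl 1 r1' with h3 | h3 <;>
    first
      | exact d2 (ssc_trans h1 (ssc_symm h2))
      | exact d1 (ssc_trans h1 (ssc_symm h3))
      | exact d3 (ssc_trans h3 (ssc_symm h2))


lemma polar_eq_zero_of_ortho [Invertible (2 : F)] {V : Type*} [AddCommGroup V] [Module F V]
    (Q : QuadraticForm F V) (x y : V)
    (hB : QuadraticMap.associated (R := F) Q x y = 0) : QuadraticMap.polar Q x y = 0 := by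
  have h1 : QuadraticMap.polar Q x y = (2 : ℕ) • (QuadraticMap.associated (R := F) Q x y) := by
    rw [← QuadraticMap.polarBilin_apply_apply, ← QuadraticMap.two_nsmul_associated F]
    simp
    rw [QuadraticMap.polar]
    field_simp
    rw [QuadraticMap.associated_apply]
    simp
    rw [← mul_assoc, mul_inv_cancel₀ (Invertible.ne_zero (2 : F)), one_mul]
  rw [h1, hB, smul_zero]

/-- Splitting off a represented value from a diagonal form. -/
lemma repr_split (h2 : (2 : F) ≠ 0) {l : List F} {a : F} (h : PN.Represents F l a) :
    ∃ l' : List F, PN.Isom F l (a :: l') := by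
  haveI := invertibleOfNonzero h2
  obtain ⟨ha, x, hx⟩ := h
  set Q : QuadraticForm F (Fin l.length → F) := PN.qf F l with hQ
  set B : LinearMap.BilinForm F (Fin l.length → F) := QuadraticMap.associated (R := F) Q with hB
  have hx0 : x ≠ 0 := fun h0 => ha (by rw [← hx, h0, map_zero])
  have hQxx : B x x = Q x := QuadraticMap.associated_eq_self_apply F Q x
  have hBxx : ¬ B.IsOrtho x x := by
    intro h0
    have h0' : B x x = 0 := h0
    rw [h0'] at hQxx
    exact ha (by rw [← hx, ← hQxx])
  set W := Submodule.orthogonalBilin B (F ∙ x) with hW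
  have hcompl : IsCompl (F ∙ x) W := LinearMap.isCompl_span_singleton_orthogonal hBxx
  set E0 : ((F ∙ x) × W) ≃ₗ[F] (Fin l.length → F) :=
    Submodule.prodEquivOfIsCompl _ _ hcompl with hE0
  set Qspan : QuadraticForm F (F ∙ x) := Q.comp (F ∙ x).subtype with hQspan
  set QW : QuadraticForm F W := Q.comp W.subtype with hQWdef
  have hpol : ∀ (u : F ∙ x) (z : W), QuadraticMap.polar Q (↑u) (↑z) = 0 := by
    intro u z
    obtain ⟨c, hc⟩ := Submodule.mem_span_singleton.mp u.2
    rw [← hc, QuadraticMap.polar_smul_left]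
    have hB0 : B x ↑z = 0 := z.2 x (Submodule.mem_span_singleton_self x)
    rw [polar_eq_zero_of_ortho Q x ↑z hB0, smul_zero]
  have I1 : (Qspan.prod QW).IsometryEquiv Q := by
    refine ⟨E0, fun p => ?_⟩
    show Q (E0 p) = (Qspan.prod QW) p
    have hE : E0 p = ↑p.1 + ↑p.2 := rfl
    rw [hE]
    have hp : QuadraticMap.polar Q (↑p.1) (↑p.2) = 0 := hpol p.1 p.2
    rw [QuadraticMap.polar] at hp
    simp only [QuadraticMap.prod_apply, hQspan, hQWdef, QuadraticMap.comp_apply,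
      Submodule.coe_subtype]
    linear_combination hp
  have Ispan : (PN.qf F [a]).IsometryEquiv Qspan := by
    refine ⟨(LinearEquiv.funUnique (Fin 1) F F :
        (Fin ([a] : List F).length → F) ≃ₗ[F] F).trans
      (LinearEquiv.toSpanNonzeroSingleton F _ x hx0), fun u => ?_⟩
    have : Qspan ((LinearEquiv.toSpanNonzeroSingleton F _ x hx0) (u ⟨0, by simp⟩)) =
        Q ((u ⟨0, by simp⟩) • x) := rfl
    show Qspan ((LinearEquiv.toSpanNonzeroSingleton F _ x hx0) (u ⟨0, by simp⟩)) = _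
    rw [this, QuadraticMap.map_smul, qf_singleton, smul_eq_mul, hx]
    ring
  obtain ⟨w, ⟨g⟩⟩ := QuadraticForm.equivalent_weightedSumSquares QW
  have IW : (PN.qf F (List.ofFn w)).IsometryEquiv QW := by
    refine (reindexIsom (finCongr (List.length_ofFn (f := w))) (List.ofFn w).get w ?_).trans g.symm
    intro i
    rw [List.get_ofFn]
    exact congrArg w (Fin.ext rfl)
  refine ⟨List.ofFn w, ⟨?_⟩⟩
  have Itot : (PN.qf F ([a] ++ List.ofFn w)).IsometryEquiv Q :=
    (appendIsom [a] (List.ofFn w)).trans ((Ispan.prod IW).trans I1)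
  exact Itot.symm


section Cancellation

variable {V V₁ V₂ : Type*} [AddCommGroup V] [Module F V]
  [AddCommGroup V₁] [Module F V₁] [AddCommGroup V₂] [Module F V₂]

lemma qmap_add (Q : QuadraticForm F V) (x y : V) :
    Q (x + y) = Q x + Q y + QuadraticMap.polar Q x y := by
  rw [QuadraticMap.polar]
  ring

lemma qmap_neg (Q : QuadraticForm F V) (x : V) : Q (-x) = Q x := by
  rw [← neg_one_smul F x, QuadraticMap.map_smul]
  norm_num

lemma polar_isom {Q₁ : QuadraticForm F V₁} {Q₂ : QuadraticForm F V₂}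
    (f : Q₁.IsometryEquiv Q₂) (x y : V₁) :
    QuadraticMap.polar Q₂ (f x) (f y) = QuadraticMap.polar Q₁ x y := by
  rw [QuadraticMap.polar, QuadraticMap.polar, ← map_add f, f.map_app, f.map_app, f.map_app]

/-- The reflection in a vector of nonzero value, as an isometry. -/
lemma exists_reflIsom (Q : QuadraticForm F V) (w : V) (hw : Q w ≠ 0) :
    ∃ g : Q.IsometryEquiv Q, ∀ x : V,
      g x = x - ((Q w)⁻¹ * QuadraticMap.polar Q x w) • w := by
  set f : V →ₗ[F] V :=
    LinearMap.id - (Q w)⁻¹ • (((QuadraticMap.polarBilin Q).flip w).smulRight w) with hf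
  have hfx : ∀ x, f x = x - ((Q w)⁻¹ * QuadraticMap.polar Q x w) • w := by
    intro x
    simp only [hf, LinearMap.sub_apply, LinearMap.id_apply, LinearMap.smul_apply,
      LinearMap.smulRight_apply, LinearMap.flip_apply, QuadraticMap.polarBilin_apply_apply,
      smul_smul]
  have hpolw : ∀ x : V, QuadraticMap.polar Q (f x) w = - QuadraticMap.polar Q x w := by
    intro x
    rw [hfx, QuadraticMap.polar_sub_left, QuadraticMap.polar_smul_left, QuadraticMap.polar_self,
      smul_eq_mul, nsmul_eq_mul]
    field_simp
    ring
  have hinv : Function.Involutive f := by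
    intro x
    rw [hfx (f x), hpolw, hfx x]
    rw [mul_neg, neg_smul]
    abel
  have happ : ∀ x, Q (f x) = Q x := by
    intro x
    rw [hfx, sub_eq_add_neg, ← neg_smul, qmap_add, QuadraticMap.map_smul,
      QuadraticMap.polar_smul_right, smul_eq_mul, smul_eq_mul]
    field_simp
    ring
  exact ⟨⟨LinearEquiv.ofInvolutive f hinv, happ⟩, hfx⟩

/-- The negation isometry. -/
noncomputable def negIsom (Q : QuadraticForm F V) : Q.IsometryEquiv Q :=
  ⟨LinearEquiv.neg F, fun x => qmap_neg Q x⟩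

lemma exists_isometry_of_eq_value (h2 : (2 : F) ≠ 0) (Q : QuadraticForm F V) {u v : V}
    (huv : Q u = Q v) (hv : Q v ≠ 0) : ∃ g : Q.IsometryEquiv Q, g u = v := by
  have h4 : Q (u + v) + Q (u - v) = 4 * Q v := by
    rw [qmap_add, sub_eq_add_neg, qmap_add, qmap_neg, QuadraticMap.polar_neg_right, huv]
    ring
  by_cases hm : Q (u - v) = 0
  · -- use the reflection in u + v composed with negation
    have hp : Q (u + v) ≠ 0 := by
      rw [hm, add_zero] at h4
      rw [h4]
      have h40 : (4 : F) ≠ 0 := by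
        have he : (4 : F) = 2 * 2 := by norm_num
        rw [he]
        exact mul_ne_zero h2 h2
      exact mul_ne_zero h40 hv
    have hpol : QuadraticMap.polar Q u (u + v) = Q (u + v) := by
      rw [QuadraticMap.polar_add_right, QuadraticMap.polar_self, two_nsmul, qmap_add, huv]
    obtain ⟨g, hg⟩ := exists_reflIsom Q (u + v) hp
    refine ⟨g.trans (negIsom Q), ?_⟩
    have h1 : g u = -v := by
      rw [hg, hpol, inv_mul_cancel₀ hp, one_smul]
      abel
    show negIsom Q (g u) = v
    rw [h1]
    show -(-v) = v
    rw [neg_neg]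
  · have hpol : QuadraticMap.polar Q u (u - v) = Q (u - v) := by
      rw [QuadraticMap.polar_sub_right, QuadraticMap.polar_self, two_nsmul, sub_eq_add_neg u v,
        qmap_add, qmap_neg, QuadraticMap.polar_neg_right, huv]
      ring
    obtain ⟨g, hg⟩ := exists_reflIsom Q (u - v) hm
    refine ⟨g, ?_⟩
    rw [hg, hpol, inv_mul_cancel₀ hm, one_smul]
    abel


lemma polar_prod (Q₁ : QuadraticForm F V₁) (Q₂ : QuadraticForm F V₂)
    (p q : V₁ × V₂) :
    QuadraticMap.polar (Q₁.prod Q₂) p q =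
      QuadraticMap.polar Q₁ p.1 q.1 + QuadraticMap.polar Q₂ p.2 q.2 := by
  simp only [QuadraticMap.polar, QuadraticMap.prod_apply, Prod.fst_add, Prod.snd_add]
  ring

lemma polar_line {a : F} (s t : Fin ([a] : List F).length → F) :
    QuadraticMap.polar (PN.qf F [a]) s t = 2 * a * (s ⟨0, by simp⟩ * t ⟨0, by simp⟩) := by
  simp only [QuadraticMap.polar, qf_singleton, Pi.add_apply]
  ring

lemma cancel_line (h2 : (2 : F) ≠ 0) {a : F} (ha : a ≠ 0)
    {Q₁ : QuadraticForm F V₁} {Q₂ : QuadraticForm F V₂}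
    (f : ((PN.qf F [a]).prod Q₁).IsometryEquiv ((PN.qf F [a]).prod Q₂)) :
    Nonempty (Q₁.IsometryEquiv Q₂) := by
  set L : QuadraticForm F (Fin ([a] : List F).length → F) := PN.qf F [a] with hL
  set e₁ : Fin ([a] : List F).length → F := fun _ => 1 with he₁
  have hLe : L e₁ = a := by rw [hL, qf_singleton]; norm_num
  set P := L.prod Q₂ with hP
  set v : (Fin ([a] : List F).length → F) × V₂ := (e₁, 0) with hv
  have hPv : P v = a := by rw [hP, QuadraticMap.prod_apply, hLe, map_zero, add_zero]
  have hPu : P (f (e₁, (0 : V₁))) = a := by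
    rw [f.map_app, QuadraticMap.prod_apply, hLe, map_zero, add_zero]
  obtain ⟨g, hg⟩ := exists_isometry_of_eq_value h2 P (u := f (e₁, (0 : V₁))) (v := v)
    (by rw [hPu, hPv]) (by rw [hPv]; exact ha)
  set k := f.trans g with hk
  have hk1 : k (e₁, (0 : V₁)) = (e₁, (0 : V₂)) := hg
  have hk1' : k.symm (e₁, (0 : V₂)) = (e₁, (0 : V₁)) := by
    rw [← hk1, isom_symm_apply_apply]
  -- vectors orthogonal to (e₁, 0) have zero first component after applying k
  have hfst : ∀ y : V₁, (k ((0 : Fin ([a] : List F).length → F), y)).1 = 0 := by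
    intro y
    have h1 : QuadraticMap.polar P (k (0, y)) (e₁, (0 : V₂)) = 0 := by
      rw [← hk1, polar_isom, polar_prod]
      simp [QuadraticMap.polar_zero_left, QuadraticMap.polar_zero_right]
    rw [polar_prod] at h1
    simp only [QuadraticMap.polar_zero_right, add_zero] at h1
    rw [polar_line] at h1
    simp only [he₁, mul_one] at h1
    have h0 : (k ((0 : Fin ([a] : List F).length → F), y)).1 ⟨0, by simp⟩ = 0 := by
      rcases mul_eq_zero.mp h1 with h | h
      · rcases mul_eq_zero.mp h with h' | h'
        · exact absurd h' h2
        · exact absurd h' ha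
      · exact h
    exact funext fun i => by rw [fin_one_eq_zero i]; exact h0
  have hfst' : ∀ z : V₂, (k.symm ((0 : Fin ([a] : List F).length → F), z)).1 = 0 := by
    intro z
    have h1 : QuadraticMap.polar ((PN.qf F [a]).prod Q₁) (k.symm (0, z)) (e₁, (0 : V₁)) = 0 := by
      rw [← hk1', polar_isom, polar_prod]
      simp [QuadraticMap.polar_zero_left, QuadraticMap.polar_zero_right]
    rw [polar_prod] at h1
    simp only [QuadraticMap.polar_zero_right, add_zero] at h1
    rw [polar_line] at h1
    simp only [he₁, mul_one] at h1
    have h0 : (k.symm ((0 : Fin ([a] : List F).length → F), z)).1 ⟨0, by simp⟩ = 0 := by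
      rcases mul_eq_zero.mp h1 with h | h
      · rcases mul_eq_zero.mp h with h' | h'
        · exact absurd h' h2
        · exact absurd h' ha
      · exact h
    exact funext fun i => by rw [fin_one_eq_zero i]; exact h0
  set fwd : V₁ →ₗ[F] V₂ :=
    (LinearMap.snd F _ V₂) ∘ₗ k.toLinearEquiv.toLinearMap ∘ₗ (LinearMap.inr F _ V₁) with hfwd
  set bwd : V₂ →ₗ[F] V₁ :=
    (LinearMap.snd F _ V₁) ∘ₗ k.symm.toLinearEquiv.toLinearMap ∘ₗ (LinearMap.inr F _ V₂)
    with hbwd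
  have hfwdy : ∀ y : V₁, fwd y = (k (0, y)).2 := fun y => rfl
  have hbwdz : ∀ z : V₂, bwd z = (k.symm (0, z)).2 := fun z => rfl
  have hcomp1 : fwd ∘ₗ bwd = LinearMap.id := by
    ext z
    simp only [LinearMap.comp_apply, LinearMap.id_apply]
    rw [hfwdy, hbwdz]
    have hz : ((0 : Fin ([a] : List F).length → F), (k.symm (0, z)).2) = k.symm (0, z) :=
      Prod.ext (hfst' z).symm rfl
    rw [hz]
    have : k (k.symm (0, z)) = (0, z) := k.toLinearEquiv.apply_symm_apply _
    rw [this]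
  have hcomp2 : bwd ∘ₗ fwd = LinearMap.id := by
    ext y
    simp only [LinearMap.comp_apply, LinearMap.id_apply]
    rw [hbwdz, hfwdy]
    have hy : ((0 : Fin ([a] : List F).length → F), (k (0, y)).2) = k (0, y) :=
      Prod.ext (hfst y).symm rfl
    rw [hy]
    have : k.symm (k (0, y)) = (0, y) := isom_symm_apply_apply k _
    rw [this]
  refine ⟨⟨LinearEquiv.ofLinear fwd bwd hcomp1 hcomp2, fun y => ?_⟩⟩
  show Q₂ (fwd y) = Q₁ y
  have hval : P (k (0, y)) = Q₁ y := by
    rw [hk]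
    show P ((f.trans g) (0, y)) = Q₁ y
    rw [(f.trans g).map_app, QuadraticMap.prod_apply, map_zero, zero_add]
  have hPk : P (k (0, y)) = L ((k (0, y)).1) + Q₂ ((k (0, y)).2) :=
    QuadraticMap.prod_apply _ _ _
  rw [hfst y, map_zero, zero_add] at hPk
  rw [hfwdy, ← hPk, hval]

/-- Witt cancellation at the level of diagonal forms. -/
lemma isom_cancel (h2 : (2 : F) ≠ 0) {a : F} {l l' : List F} (ha : a ≠ 0)
    (h : PN.Isom F (a :: l) (a :: l')) : PN.Isom F l l' := by
  obtain ⟨f⟩ := h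
  have f0 : (PN.qf F ([a] ++ l)).IsometryEquiv (PN.qf F ([a] ++ l')) := f
  exact cancel_line h2 ha ((appendIsom [a] l).symm.trans (f0.trans (appendIsom [a] l')))

end Cancellation



lemma subform_nil (φ : List F) : PN.Subform F [] φ := ⟨φ, isom_refl φ⟩

lemma main_aux (h2 : (2 : F) ≠ 0) (hrigid : PN.Rigid F) (hlevel : PN.level F ≠ 2) :
    ∀ ψ φ₁ φ₂ : List F, PN.Anisotropic F (φ₁ ++ φ₂) → PN.Subform F ψ (φ₁ ++ φ₂) →
      ∃ ψ₁ ψ₂ : List F, PN.Subform F ψ₁ φ₁ ∧ PN.Subform F ψ₂ φ₂ ∧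
        PN.Isom F ψ (ψ₁ ++ ψ₂) := by
  intro ψ
  induction ψ with
  | nil =>
    intro φ₁ φ₂ _ _
    exact ⟨[], [], subform_nil φ₁, subform_nil φ₂, isom_refl []⟩
  | cons a ψ' IH =>
    intro φ₁ φ₂ han hsub
    obtain ⟨r, hIs⟩ := hsub
    have hanc : PN.Anisotropic F ((a :: ψ') ++ r) := aniso_of_isom hIs han
    have hanc' : PN.Anisotropic F (a :: (ψ' ++ r)) := hanc
    have ha : a ≠ 0 := head_ne_zero hanc'
    have hra : PN.Represents F (φ₁ ++ φ₂) a :=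
      repr_of_isom (isom_symm hIs) (repr_head (l := ψ' ++ r) ha)
    have hanPsiR : PN.Anisotropic F (ψ' ++ r) := aniso_tail hanc'
    rcases value_split hrigid hlevel han hra with hc | hc
    · obtain ⟨φ₁', hsp⟩ := repr_split h2 hc
      have hIso2 : PN.Isom F (φ₁ ++ φ₂) ((a :: φ₁') ++ φ₂) :=
        isom_append_congr hsp (isom_refl φ₂)
      have hcanc : PN.Isom F (a :: (ψ' ++ r)) (a :: (φ₁' ++ φ₂)) :=
        isom_trans (isom_symm hIs) hIso2
      have hW : PN.Isom F (ψ' ++ r) (φ₁' ++ φ₂) := isom_cancel h2 ha hcanc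
      have han' : PN.Anisotropic F (φ₁' ++ φ₂) := aniso_of_isom hW hanPsiR
      obtain ⟨ψ₁, ψ₂, hs₁, hs₂, hIso₃⟩ := IH φ₁' φ₂ han' ⟨r, isom_symm hW⟩
      obtain ⟨t, ht⟩ := hs₁
      refine ⟨a :: ψ₁, ψ₂, ⟨t, isom_trans hsp (isom_cons a ht)⟩, hs₂, ?_⟩
      exact isom_cons a hIso₃
    · obtain ⟨φ₂', hsp⟩ := repr_split h2 hc
      have hIso2 : PN.Isom F (φ₁ ++ φ₂) (a :: (φ₁ ++ φ₂')) := by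
        have s1 : PN.Isom F (φ₁ ++ φ₂) (φ₁ ++ (a :: φ₂')) :=
          isom_append_congr (isom_refl φ₁) hsp
        have s2 : PN.Isom F (φ₁ ++ (a :: φ₂')) ((a :: φ₂') ++ φ₁) :=
          isom_append_comm φ₁ (a :: φ₂')
        have s3 : PN.Isom F (a :: (φ₂' ++ φ₁)) (a :: (φ₁ ++ φ₂')) :=
          isom_cons a (isom_append_comm φ₂' φ₁)
        exact isom_trans s1 (isom_trans s2 s3)
      have hcanc : PN.Isom F (a :: (ψ' ++ r)) (a :: (φ₁ ++ φ₂')) :=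
        isom_trans (isom_symm hIs) hIso2
      have hW : PN.Isom F (ψ' ++ r) (φ₁ ++ φ₂') := isom_cancel h2 ha hcanc
      have han' : PN.Anisotropic F (φ₁ ++ φ₂') := aniso_of_isom hW hanPsiR
      obtain ⟨ψ₁, ψ₂, hs₁, hs₂, hIso₃⟩ := IH φ₁ φ₂' han' ⟨r, isom_symm hW⟩
      obtain ⟨t, ht⟩ := hs₂
      refine ⟨ψ₁, a :: ψ₂, hs₁, ⟨t, isom_trans hsp (isom_cons a ht)⟩, ?_⟩
      have e0 : PN.Isom F (a :: ψ') (a :: (ψ₁ ++ ψ₂)) := isom_cons a hIso₃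
      have e1 : PN.Isom F ([a] ++ (ψ₁ ++ ψ₂)) (([a] ++ ψ₁) ++ ψ₂) :=
        isom_of_eq (List.append_assoc [a] ψ₁ ψ₂).symm
      have e2 : PN.Isom F (([a] ++ ψ₁) ++ ψ₂) ((ψ₁ ++ [a]) ++ ψ₂) :=
        isom_append_congr (isom_append_comm [a] ψ₁) (isom_refl ψ₂)
      have e3 : PN.Isom F ((ψ₁ ++ [a]) ++ ψ₂) (ψ₁ ++ ([a] ++ ψ₂)) :=
        isom_of_eq (List.append_assoc ψ₁ [a] ψ₂)
      exact isom_trans e0 (isom_trans e1 (isom_trans e2 e3))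

end PNAux

theorem stmt_14 (F : Type*) [Field F] (hF : (2 : F) ≠ 0)
    (hrigid : PN.Rigid F) (hlevel : PN.level F ≠ 2)
    (φ₁ φ₂ : List F) (hn₁ : PN.Nondeg F φ₁) (hn₂ : PN.Nondeg F φ₂)
    (han : PN.Anisotropic F (φ₁ ++ φ₂))
    (ψ : List F) (hψ : PN.Subform F ψ (φ₁ ++ φ₂)) :
    ∃ ψ₁ ψ₂ : List F, PN.Subform F ψ₁ φ₁ ∧ PN.Subform F ψ₂ φ₂ ∧
      PN.Isom F ψ (ψ₁ ++ ψ₂) :=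
  PNAux.main_aux hF hrigid hlevel ψ φ₁ φ₂ han hψ
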